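/- Let $T$ be a self-adjoint operator on a finite-dimensional complex Hilbert space with eigenvalues $a_1 \le \dots \le a_n$ (listed with multiplicity), and suppose $a_n - a_1 \ge \delta > 0$. Then there exists an orthogonal projection $P$ such that $\|[T, P]\| \ge \delta/2$, where $[T,P] = TP - PT$. -/

import Mathlib

open scoped InnerProductSpace ComplexConjugate

lemma exists_eig {H : Type*} [NormedAddCommGroup H] [InnerProductSpace ℂ H]
    [FiniteDimensional ℂ H] (T : H →L[ℂ] H) {μ : ℂ} (h : μ ∈ spectrum ℂ T) :
    ∃ v : H, v ≠ 0 ∧ T v = μ • v := by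
  have h' : μ ∈ spectrum ℂ (T : H →ₗ[ℂ] H) := by
    rw [spectrum.mem_iff] at h ⊢
    intro hu
    apply h
    obtain ⟨u, hu⟩ := hu
    refine ⟨⟨algebraMap ℂ (H →L[ℂ] H) μ - T,
      LinearMap.toContinuousLinearMap (u⁻¹ : (H →ₗ[ℂ] H)ˣ).val, ?_, ?_⟩, rfl⟩ <;>
    · ext x
      have := congrFun (congrArg DFunLike.coe (hu ▸ u.mul_inv)) x
      have := congrFun (congrArg DFunLike.coe (hu ▸ u.inv_mul)) x
      simp_all [ContinuousLinearMap.mul_apply, Module.End.mul_apply]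
  have he : Module.End.HasEigenvalue (T : H →ₗ[ℂ] H) μ :=
    Module.End.hasEigenvalue_iff_mem_spectrum.mpr h'
  obtain ⟨v, hv⟩ := he.exists_hasEigenvector
  exact ⟨v, hv.2, hv.apply_eq_smul⟩

lemma exists_unit_eig {H : Type*} [NormedAddCommGroup H] [InnerProductSpace ℂ H]
    [FiniteDimensional ℂ H] (T : H →L[ℂ] H) {μ : ℂ} (h : μ ∈ spectrum ℂ T) :
    ∃ v : H, ‖v‖ = 1 ∧ T v = μ • v := by
  obtain ⟨v, hv0, hv⟩ := exists_eig T h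
  refine ⟨(‖v‖⁻¹ : ℂ) • v, ?_, ?_⟩
  · rw [norm_smul]
    simp [norm_inv, inv_mul_cancel₀ (norm_ne_zero_iff.mpr hv0)]
  · rw [map_smul, hv, smul_comm]

theorem stmt_15 {H : Type*} [NormedAddCommGroup H] [InnerProductSpace ℂ H]
    [FiniteDimensional ℂ H] (T : H →L[ℂ] H) (hT : IsSelfAdjoint T)
    (δ a b : ℝ) (hδ : 0 < δ)
    (ha : (a : ℂ) ∈ spectrum ℂ T) (hb : (b : ℂ) ∈ spectrum ℂ T)
    (hab : b - a ≥ δ) :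
    ∃ P : H →L[ℂ] H, P ∘L P = P ∧ IsSelfAdjoint P ∧
      δ / 2 ≤ ‖T ∘L P - P ∘L T‖ := by
  obtain ⟨f, hf1, hTf⟩ := exists_unit_eig T ha
  obtain ⟨g, hg1, hTg⟩ := exists_unit_eig T hb
  have hane : (a : ℂ) ≠ (b : ℂ) := by
    intro h
    rw [Complex.ofReal_inj] at h
    linarith
  -- orthogonality of f and g
  have hfg : ⟪f, g⟫_ℂ = 0 := by
    have hsym := hT.isSymmetric f g
    simp only [ContinuousLinearMap.coe_coe] at hsym
    rw [hTf, hTg, inner_smul_left, inner_smul_right, Complex.conj_ofReal] at hsym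
    have : ((a : ℂ) - b) * ⟪f, g⟫_ℂ = 0 := by linear_combination hsym
    rcases mul_eq_zero.mp this with h | h
    · exact absurd (sub_eq_zero.mp h) hane
    · exact h
  have hgf : ⟪g, f⟫_ℂ = 0 := by
    rw [← inner_conj_symm, hfg, map_zero]
  have hff : ⟪f, f⟫_ℂ = 1 := by
    rw [inner_self_eq_norm_sq_to_K, hf1]; norm_num
  have hgg : ⟪g, g⟫_ℂ = 1 := by
    rw [inner_self_eq_norm_sq_to_K, hg1]; norm_num
  set c : ℝ := (Real.sqrt 2)⁻¹ with hc
  have hc2 : c ^ 2 = 1 / 2 := by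
    rw [hc, inv_pow, Real.sq_sqrt (by norm_num : (2:ℝ) ≥ 0)]
    norm_num
  have hcpos : 0 < c := by positivity
  set u : H := (c : ℂ) • f + (c : ℂ) • g with hu
  set v : H := (-c : ℂ) • f + (c : ℂ) • g with hv
  have norm_comb : ∀ x y : ℝ, ‖(x : ℂ) • f + (y : ℂ) • g‖ ^ 2 = x ^ 2 + y ^ 2 := by
    intro x y
    have h0 : ⟪(x : ℂ) • f, (y : ℂ) • g⟫_ℂ = 0 := by
      rw [inner_smul_left, inner_smul_right, hfg]; ring
    rw [norm_add_sq (𝕜 := ℂ), h0, map_zero, norm_smul, norm_smul]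
    simp [hf1, hg1, Complex.norm_real, sq_abs]
  have hun : ‖u‖ = 1 := by
    have := norm_comb c c
    rw [← hu, hc2] at this
    nlinarith [norm_nonneg u]
  have hvn : ‖v‖ = 1 := by
    have := norm_comb (-c) c
    rw [Complex.ofReal_neg, ← hv, hc2] at this
    nlinarith [norm_nonneg v]
  set P : H →L[ℂ] H := (ℂ ∙ u).subtypeL ∘L (ℂ ∙ u).orthogonalProjectionOnto with hP
  have hPapply : ∀ w : H, P w = ⟪u, w⟫_ℂ • u := by
    intro w
    rw [hP]
    change (ℂ ∙ u).starProjection w = _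
    rw [Submodule.starProjection_singleton, hun]
    norm_num
  have huu : ⟪u, u⟫_ℂ = 1 := by
    rw [inner_self_eq_norm_sq_to_K, hun]; norm_num
  refine ⟨P, ?_, ?_, ?_⟩
  · ext w
    simp only [ContinuousLinearMap.comp_apply, hPapply, inner_smul_right, huu, mul_one]
  · exact isSelfAdjoint_starProjection (ℂ ∙ u)
  · -- norm bound
    set A : H →L[ℂ] H := T ∘L P - P ∘L T with hA
    have hTu : T u = (c : ℂ) • ((a:ℂ) • f) + (c : ℂ) • ((b:ℂ) • g) := by
      rw [hu, map_add, map_smul, map_smul, hTf, hTg]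
    have huTu : ⟪u, T u⟫_ℂ = ((a + b) / 2 : ℝ) := by
      rw [hTu, hu]
      simp only [inner_add_left, inner_add_right, inner_smul_left, inner_smul_right,
        hff, hgg, hfg, hgf, Complex.conj_ofReal]
      have h2 : (c:ℂ) * c = 1/2 := by
        have := hc2
        have : ((c^2 : ℝ) : ℂ) = ((1/2 : ℝ) : ℂ) := by rw [hc2]
        push_cast at this
        linear_combination this
      push_cast
      linear_combination (↑a + ↑b) * h2
    have hAu : A u = T u - (((a + b) / 2 : ℝ) : ℂ) • u := by
      rw [hA]
      simp only [ContinuousLinearMap.sub_apply, ContinuousLinearMap.comp_apply]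
      rw [hPapply, hPapply, huu, one_smul, huTu]
    have hvAu : ⟪v, A u⟫_ℂ = ((b - a) / 2 : ℝ) := by
      rw [hAu, hTu, hu, hv]
      simp only [inner_sub_right, inner_add_left, inner_add_right, inner_smul_left,
        inner_smul_right, hff, hgg, hfg, hgf, map_neg, Complex.conj_ofReal]
      have h2 : (c:ℂ) * c = 1/2 := by
        have : ((c^2 : ℝ) : ℂ) = ((1/2 : ℝ) : ℂ) := by rw [hc2]
        push_cast at this
        linear_combination this
      push_cast
      linear_combination (↑b - ↑a) * h2
    have hchain : ((b - a) / 2 : ℝ) ≤ ‖A‖ := by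
      have h1 : ‖⟪v, A u⟫_ℂ‖ ≤ ‖v‖ * ‖A u‖ := norm_inner_le_norm v (A u)
      rw [hvAu, hvn, one_mul] at h1
      have h2 : ‖A u‖ ≤ ‖A‖ * ‖u‖ := A.le_opNorm u
      rw [hun, mul_one] at h2
      have h3 : ‖(((b - a) / 2 : ℝ) : ℂ)‖ = (b - a) / 2 := by
        rw [Complex.norm_real, Real.norm_eq_abs, abs_of_nonneg (by linarith)]
      rw [h3] at h1
      linarith
    linarith
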